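/- Let S be an optimal feasible capacity installation of cost at most (M+2)·m + 8p for the constructed two-color f-SAND instance, with an associated routing in which the flow of each color induces no directed cycles and every terminal's path contains exactly one node of ∪_{i=1}^p {y_i^1, y_i^3, y_i^5, y_i^7}. For i ∈ [p], let G_i be the subgraph of G induced by {r, y_i^1, …, y_i^7}, let χ_i be the total cost of the capacity S installs on edges of G_i, and let n_i be the number of clause nodes k_j whose path P_1^j uses edges of G_i. Then χ_i ≥ 8 + 2·n_i, and the inequality is strict whenever the variable x_i is in conflict (i.e., some k_j routes flow to r on paths whose first edge has endpoint y_i^4 while some other k_{j'} routes flow to r on paths whose first edge has endpoint y_i^2 or y_i^6). -/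

import Mathlib

open scoped Classical
open Finset

namespace FSand

variable {V : Type} [Fintype V] [DecidableEq V]

/-- An edge crosses the cut `(S, Sᶜ)`. -/
def Crossing (S : Finset V) (e : Sym2 V) : Prop :=
  ∃ u v, e = s(u, v) ∧ u ∈ S ∧ v ∉ S

/-- Total capacity installed on edges crossing the cut `(S, Sᶜ)`. -/
noncomputable def cutCap (x : Sym2 V → ℕ) (S : Finset V) : ℕ :=
  ∑ e ∈ Finset.univ.filter (Crossing S), x e

/-- Feasibility of a capacity installation for the f-SAND instance `(G, r, C)`. -/
def Feasible {ι : Type} (G : SimpleGraph V) (r : V) (C : ι → Finset V)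
    (x : Sym2 V → ℕ) : Prop :=
  (∀ e, e ∉ G.edgeSet → x e = 0) ∧
  ∀ S : Finset V, r ∉ S → ∀ i : ι, (C i ∩ S).card ≤ cutCap x S

/-- Cost of a capacity installation. -/
noncomputable def instCost (w : Sym2 V → ℝ) (x : Sym2 V → ℕ) : ℝ :=
  ∑ e : Sym2 V, w e * (x e : ℝ)

end FSand

namespace SandSat

/-- Vertices of the reduction graph: the root, one node `k_j` per clause, and seven
nodes `y_i^1, …, y_i^7` per variable (indexed here by `Fin 7`, so `y_i^ℓ` has index
`ℓ - 1`). -/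
abbrev SandV (m p : ℕ) := Option (Fin m ⊕ (Fin p × Fin 7))

variable {m p : ℕ}

/-- The root. -/
def rt : SandV m p := none
/-- The clause node `k_j`. -/
def kv (j : Fin m) : SandV m p := some (Sum.inl j)
/-- The variable node `y_i^{ℓ+1}`. -/
def yv (i : Fin p) (ℓ : Fin 7) : SandV m p := some (Sum.inr (i, ℓ))

/-- The SAT formula, given by the clause indices `i1 i, i2 i` of the two positive
occurrences and `i3 i` of the negated occurrence of each variable `x_i`, is
satisfiable. -/
def Satisfiable (i1 i2 i3 : Fin p → Fin m) : Prop :=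
  ∃ a : Fin p → Bool, ∀ j : Fin m,
    (∃ i, (i1 i = j ∨ i2 i = j) ∧ a i = true) ∨ (∃ i, i3 i = j ∧ a i = false)

/-- The edges `{r, y_i^1}, {r, y_i^3}, {r, y_i^5}, {r, y_i^7}` (cost 2). -/
def RootEdge (e : Sym2 (SandV m p)) : Prop :=
  ∃ i, e = s(rt, yv i 0) ∨ e = s(rt, yv i 2) ∨ e = s(rt, yv i 4) ∨ e = s(rt, yv i 6)

/-- The edges `{y_i^ℓ, y_i^{ℓ+1}}`, `ℓ = 1, …, 6` (cost 1). -/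
def PathEdge (e : Sym2 (SandV m p)) : Prop :=
  ∃ i, e = s(yv i 0, yv i 1) ∨ e = s(yv i 1, yv i 2) ∨ e = s(yv i 2, yv i 3) ∨
    e = s(yv i 3, yv i 4) ∨ e = s(yv i 4, yv i 5) ∨ e = s(yv i 5, yv i 6)

/-- The edges `{y_i^2, k_{i_1}}, {y_i^4, k_{i_3}}, {y_i^6, k_{i_2}}` (cost `M`). -/
def CrossEdge (i1 i2 i3 : Fin p → Fin m) (e : Sym2 (SandV m p)) : Prop :=
  ∃ i, e = s(yv i 1, kv (i1 i)) ∨ e = s(yv i 3, kv (i3 i)) ∨ e = s(yv i 5, kv (i2 i))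

/-- The reduction graph. -/
def sandG (i1 i2 i3 : Fin p → Fin m) : SimpleGraph (SandV m p) :=
  SimpleGraph.fromEdgeSet
    {e | RootEdge e ∨ PathEdge e ∨ CrossEdge i1 i2 i3 e}

/-- The edge costs of the reduction graph. -/
noncomputable def sandW (M : ℝ) (i1 i2 i3 : Fin p → Fin m) :
    Sym2 (SandV m p) → ℝ := fun e =>
  if RootEdge e then 2
  else if PathEdge e then 1
  else if CrossEdge i1 i2 i3 e then M
  else 0

/-- The two colors: `C_1` consists of all clause nodes together with the `y_i^1, y_i^5`,
and `C_2` of all clause nodes together with the `y_i^3, y_i^7`. -/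
def sandC (q : Fin 2) : Finset (SandV m p) :=
  (Finset.univ.image kv) ∪
    (if q = 0 then
      Finset.univ.image (fun i => yv i 0) ∪ Finset.univ.image (fun i => yv i 4)
    else
      Finset.univ.image (fun i => yv i 2) ∪ Finset.univ.image (fun i => yv i 6))

/-- Finset of cost-`M` edges. -/
noncomputable def crossE (i1 i2 i3 : Fin p → Fin m) : Finset (Sym2 (SandV m p)) :=
  Finset.univ.filter (CrossEdge i1 i2 i3)

end SandSat

namespace FSand

/-- A routing associated with a capacity installation `x` of a two-color instance:
for each color `q` and each terminal `v` of color `q`, a path from `v` to the root, such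
that every edge lies on at most `x e` paths of each color. -/
structure AssocRouting {V : Type} [Fintype V] [DecidableEq V]
    (G : SimpleGraph V) (r : V) (C : Fin 2 → Finset V) (x : Sym2 V → ℕ) where
  P : (q : Fin 2) → (v : V) → v ∈ C q → G.Walk v r
  isPath : ∀ q v hv, (P q v hv).IsPath
  cap : ∀ q e, ((C q).attach.filter (fun v => e ∈ (P q v.1 v.2).edges)).card ≤ x e

variable {V : Type} [Fintype V] [DecidableEq V] {G : SimpleGraph V} {r : V}
  {C : Fin 2 → Finset V} {x : Sym2 V → ℕ}

/-- The dart `d` is used by the flow of color `q`. -/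
def AssocRouting.usedDart (R : AssocRouting G r C x) (q : Fin 2) (d : G.Dart) : Prop :=
  ∃ v, ∃ hv : v ∈ C q, d ∈ (R.P q v hv).darts

/-- The flow of color `q` induces no directed cycle: no closed walk of positive length
all of whose darts are used by the flow of color `q`. -/
def AssocRouting.NoDirCycle (R : AssocRouting G r C x) (q : Fin 2) : Prop :=
  ∀ (v : V) (c : G.Walk v v), 0 < c.length → ¬ ∀ d ∈ c.darts, R.usedDart q d

end FSand

namespace SandSat

/-- The nodes `y_i^1, y_i^3, y_i^5, y_i^7`. -/
def Yodd {m p : ℕ} : Finset (SandV m p) :=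
  Finset.univ.image (fun i => yv i 0) ∪ Finset.univ.image (fun i => yv i 2) ∪
    Finset.univ.image (fun i => yv i 4) ∪ Finset.univ.image (fun i => yv i 6)

end SandSat

namespace SandSat

open FSand

variable {m p : ℕ}

/-- Every clause node belongs to both colors. -/
lemma kv_mem_sandC (q : Fin 2) (j : Fin m) :
    (kv j : SandV m p) ∈ (sandC q : Finset (SandV m p)) :=
  Finset.mem_union_left _ (Finset.mem_image_of_mem _ (Finset.mem_univ j))

/-- The vertex set `{r, y_i^1, …, y_i^7}` of the induced subgraph `G_i`. -/
def Vi (i : Fin p) : Finset (SandV m p) :=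
  insert rt (Finset.univ.image (yv i))

/-- `χ_i`: total cost of the capacity installed on the edges of `G_i`. -/
noncomputable def chi (i1 i2 i3 : Fin p → Fin m) (M : ℝ)
    (x : Sym2 (SandV m p) → ℕ) (i : Fin p) : ℝ :=
  ∑ e ∈ Finset.univ.filter
      (fun e => e ∈ (sandG i1 i2 i3).edgeSet ∧ ∀ a ∈ e, a ∈ Vi i),
    sandW M i1 i2 i3 e * (x e : ℝ)

/-- `n_i`: the number of clause nodes `k_j` whose color-1 path uses an edge of `G_i`. -/
noncomputable def nCl (i1 i2 i3 : Fin p → Fin m) {x : Sym2 (SandV m p) → ℕ}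
    (R : AssocRouting (sandG i1 i2 i3) rt sandC x) (i : Fin p) : ℕ :=
  (Finset.univ.filter (fun j : Fin m =>
    ∃ e ∈ (R.P 0 (kv j) (kv_mem_sandC 0 j)).edges, ∀ a ∈ e, a ∈ Vi i)).card

/-- The variable `x_i` is in conflict: some clause node routes (both colors) on paths
whose shared first edge has endpoint `y_i^4`, while a different clause node routes on
paths whose shared first edge has endpoint `y_i^2` or `y_i^6`. -/
def InConflict (i1 i2 i3 : Fin p → Fin m) {x : Sym2 (SandV m p) → ℕ}
    (R : AssocRouting (sandG i1 i2 i3) rt sandC x) (i : Fin p) : Prop :=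
  ∃ j j' : Fin m, j ≠ j' ∧
    (∃ e, (R.P 0 (kv j) (kv_mem_sandC 0 j)).edges.head? = some e ∧
          (R.P 1 (kv j) (kv_mem_sandC 1 j)).edges.head? = some e ∧ yv i 3 ∈ e) ∧
    (∃ e', (R.P 0 (kv j') (kv_mem_sandC 0 j')).edges.head? = some e' ∧
           (R.P 1 (kv j') (kv_mem_sandC 1 j')).edges.head? = some e' ∧
           (yv i 1 ∈ e' ∨ yv i 5 ∈ e'))

end SandSat
namespace SandSat

variable {m p : ℕ}

@[simp] lemma yv_injEq {a a' : Fin p} {b b' : Fin 7} :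
    (yv a b : SandV m p) = yv a' b' ↔ a = a' ∧ b = b' := by
  simp [yv, Prod.ext_iff]

@[simp] lemma kv_injEq {j j' : Fin m} : (kv j : SandV m p) = kv j' ↔ j = j' := by
  simp [kv]

@[simp] lemma rt_eq_kv {j : Fin m} : (rt : SandV m p) = kv j ↔ False := by simp [rt, kv]
@[simp] lemma kv_eq_rt {j : Fin m} : (kv j : SandV m p) = rt ↔ False := by simp [rt, kv]
@[simp] lemma rt_eq_yv {a b} : (rt : SandV m p) = yv a b ↔ False := by simp [rt, yv]
@[simp] lemma yv_eq_rt {a b} : (yv a b : SandV m p) = rt ↔ False := by simp [rt, yv]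
@[simp] lemma kv_eq_yv {j a b} : (kv j : SandV m p) = yv a b ↔ False := by simp [kv, yv]
@[simp] lemma yv_eq_kv {j a b} : (yv a b : SandV m p) = kv j ↔ False := by simp [kv, yv]

example : ((1:Fin 7) = 3) ↔ False := by simp

variable {i1 i2 i3 : Fin p → Fin m}

lemma adj_sandG {u v : SandV m p} :
    (sandG i1 i2 i3).Adj u v ↔
      (RootEdge s(u,v) ∨ PathEdge s(u,v) ∨ CrossEdge i1 i2 i3 s(u,v)) ∧ u ≠ v := by
  rw [sandG, SimpleGraph.fromEdgeSet_adj]; rfl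

lemma mem_edgeSet_sandG {e : Sym2 (SandV m p)} :
    e ∈ (sandG i1 i2 i3).edgeSet ↔
      (RootEdge e ∨ PathEdge e ∨ CrossEdge i1 i2 i3 e) := by
  rw [sandG, SimpleGraph.edgeSet_fromEdgeSet]
  constructor
  · exact fun h => h.1
  · intro h
    refine ⟨h, ?_⟩
    rcases h with ⟨a, (rfl|rfl|rfl|rfl)⟩ | ⟨a, (rfl|rfl|rfl|rfl|rfl|rfl)⟩ | ⟨a, (rfl|rfl|rfl)⟩ <;>
      simp [Sym2.isDiag_iff_proj_eq]

lemma mem_yodd {a : Fin p} {b : Fin 7} (hb : b = 0 ∨ b = 2 ∨ b = 4 ∨ b = 6) :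
    (yv a b : SandV m p) ∈ (Yodd : Finset (SandV m p)) := by
  rcases hb with rfl|rfl|rfl|rfl <;> simp [Yodd]

-- neighbors of the root are Yodd
lemma yodd_of_adj_rt {u : SandV m p} (h : (sandG i1 i2 i3).Adj u rt) :
    u ∈ (Yodd : Finset (SandV m p)) := by
  rw [adj_sandG] at h
  obtain ⟨hs, hne⟩ := h
  rcases hs with ⟨a, h'|h'|h'|h'⟩ | ⟨a, h'|h'|h'|h'|h'|h'⟩ | ⟨a, h'|h'|h'⟩ <;>
    rw [Sym2.eq_iff] at h' <;> simp_all <;>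
    (try subst h') <;>
    exact mem_yodd (by simp)

end SandSat
namespace SandSat

open SimpleGraph

variable {m p : ℕ} {i1 i2 i3 : Fin p → Fin m}

/-- Generic: a walk to `r` from `v ≠ r` has a last edge `s(u, r)` with `u` on the
support. -/
lemma exists_last_edge {V' : Type*} {G : SimpleGraph V'} {r v : V'}
    (W : G.Walk v r) (hv : v ≠ r) :
    ∃ u, u ∈ W.support ∧ G.Adj u r ∧ s(u, r) ∈ W.edges := by
  induction W with
  | nil => exact absurd rfl hv
  | @cons a b c h q ih =>
    by_cases hb : b = c
    · subst hb
      exact ⟨a, by simp, h, by simp⟩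
    · obtain ⟨u, h1, h2, h3⟩ := ih hb
      exact ⟨u, by simp [h1], h2, by simp [h3]⟩

/-- Generic: a path from `a` to `c` containing the edge `s(a, c)` is that single
edge. -/
lemma edges_eq_of_start_edge {V' : Type*} {G : SimpleGraph V'} {a c : V'}
    (W : G.Walk a c) (hW : W.IsPath) (hne : a ≠ c) (h : s(a, c) ∈ W.edges) :
    W.edges = [s(a, c)] := by
  cases W with
  | nil => simp at h
  | @cons _ b _ h1 q =>
    rw [SimpleGraph.Walk.cons_isPath_iff] at hW
    rw [SimpleGraph.Walk.edges_cons] at h ⊢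
    rcases List.mem_cons.mp h with he | hq
    · have hbc : b = c := by
        rw [Sym2.eq_iff] at he
        rcases he with ⟨-, h2⟩ | ⟨-, h2⟩
        · exact h2.symm
        · exact absurd h2.symm hne
      subst hbc
      have : q = SimpleGraph.Walk.nil := SimpleGraph.Walk.isPath_iff_eq_nil.mp hW.1
      subst this
      simp [← he]
    · exact absurd (SimpleGraph.Walk.fst_mem_support_of_mem_edges q hq) hW.2

/-- Decoding: neighbors of a clause node. -/
lemma neighbor_of_kv {j : Fin m} {u : SandV m p} (h : (sandG i1 i2 i3).Adj (kv j) u) :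
    ∃ (a : Fin p) (ℓ : Fin 7), (ℓ = 1 ∨ ℓ = 3 ∨ ℓ = 5) ∧ u = yv a ℓ := by
  rw [adj_sandG] at h
  obtain ⟨hs, hne⟩ := h
  rcases hs with ⟨a, h'|h'|h'|h'⟩ | ⟨a, h'|h'|h'|h'|h'|h'⟩ | ⟨a, h'|h'|h'⟩ <;>
    rw [Sym2.eq_iff] at h' <;> simp_all <;>
    first
      | exact ⟨a, 1, by simp, h'.2⟩
      | exact ⟨a, 3, by simp, h'.2⟩
      | exact ⟨a, 5, by simp, h'.2⟩

/-- Decoding: neighbors of an even node `y_i^{2k}` (index 1, 3, 5): either a clause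
node or the adjacent odd nodes. -/
lemma neighbor_of_yeven {a : Fin p} {ℓ : Fin 7} (hl : ℓ = 1 ∨ ℓ = 3 ∨ ℓ = 5)
    {u : SandV m p} (h : (sandG i1 i2 i3).Adj (yv a ℓ) u) :
    (∃ j', u = kv j') ∨
      ((ℓ = 1 ∧ (u = yv a 0 ∨ u = yv a 2)) ∨ (ℓ = 3 ∧ (u = yv a 2 ∨ u = yv a 4)) ∨
        (ℓ = 5 ∧ (u = yv a 4 ∨ u = yv a 6))) := by
  rw [adj_sandG] at h
  obtain ⟨hs, hne⟩ := h
  rcases hl with rfl|rfl|rfl <;>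
    rcases hs with ⟨b, h'|h'|h'|h'⟩ | ⟨b, h'|h'|h'|h'|h'|h'⟩ | ⟨b, h'|h'|h'⟩ <;>
    rw [Sym2.eq_iff] at h' <;> simp_all <;> aesop

end SandSat
namespace SandSat

open FSand SimpleGraph

variable {m p : ℕ} {i1 i2 i3 : Fin p → Fin m}

lemma cross_of_kv_mem {e : Sym2 (SandV m p)} (he : e ∈ (sandG i1 i2 i3).edgeSet)
    {j : Fin m} (hj : kv j ∈ e) : CrossEdge i1 i2 i3 e := by
  rw [mem_edgeSet_sandG] at he
  rcases he with ⟨a, (rfl|rfl|rfl|rfl)⟩ | ⟨a, (rfl|rfl|rfl|rfl|rfl|rfl)⟩ |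
    ⟨a, (rfl|rfl|rfl)⟩ <;> simp_all [Sym2.mem_iff] <;>
    exact ⟨a, by simp⟩

lemma rt_mem_of_root {e : Sym2 (SandV m p)} (he : RootEdge e) : rt ∈ e := by
  rcases he with ⟨a, (rfl|rfl|rfl|rfl)⟩ <;> simp [Sym2.mem_iff]

lemma kv_mem_of_cross {e : Sym2 (SandV m p)} (he : CrossEdge i1 i2 i3 e) :
    ∃ j, kv j ∈ e := by
  rcases he with ⟨a, (rfl|rfl|rfl)⟩
  · exact ⟨i1 a, by simp [Sym2.mem_iff]⟩
  · exact ⟨i3 a, by simp [Sym2.mem_iff]⟩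
  · exact ⟨i2 a, by simp [Sym2.mem_iff]⟩

lemma card_kv_filter {e : Sym2 (SandV m p)} (he : CrossEdge i1 i2 i3 e) :
    (Finset.univ.filter fun j : Fin m => kv j ∈ e).card = 1 := by
  rcases he with ⟨a, (rfl|rfl|rfl)⟩
  · rw [show (Finset.univ.filter fun j : Fin m => kv j ∈ s(yv a 1, kv (i1 a))) = {i1 a} by
      ext j; simp [Sym2.mem_iff]]
    exact Finset.card_singleton _
  · rw [show (Finset.univ.filter fun j : Fin m => kv j ∈ s(yv a 3, kv (i3 a))) = {i3 a} by
      ext j; simp [Sym2.mem_iff]]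
    exact Finset.card_singleton _
  · rw [show (Finset.univ.filter fun j : Fin m => kv j ∈ s(yv a 5, kv (i2 a))) = {i2 a} by
      ext j; simp [Sym2.mem_iff]]
    exact Finset.card_singleton _

lemma yv0_mem_sandC {a : Fin p} : (yv a 0 : SandV m p) ∈ (sandC 0 : Finset (SandV m p)) := by
  simp [sandC]
lemma yv4_mem_sandC {a : Fin p} : (yv a 4 : SandV m p) ∈ (sandC 0 : Finset (SandV m p)) := by
  simp [sandC]
lemma yv2_mem_sandC {a : Fin p} : (yv a 2 : SandV m p) ∈ (sandC 1 : Finset (SandV m p)) := by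
  simp [sandC]
lemma yv6_mem_sandC {a : Fin p} : (yv a 6 : SandV m p) ∈ (sandC 1 : Finset (SandV m p)) := by
  simp [sandC]

variable {x : Sym2 (SandV m p) → ℕ}

/-- Terminal paths are single edges. -/
lemma term_edges (R : AssocRouting (sandG i1 i2 i3) rt sandC x)
    (honeY : ∀ q v hv, ((R.P q v hv).support.toFinset ∩ Yodd).card = 1)
    {q : Fin 2} {a : Fin p} {b : Fin 7} (hb : b = 0 ∨ b = 2 ∨ b = 4 ∨ b = 6)
    (hv : yv a b ∈ (sandC q : Finset (SandV m p))) :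
    (R.P q (yv a b) hv).edges = [s(yv a b, rt)] := by
  set W := R.P q (yv a b) hv with hWdef
  obtain ⟨u, hu1, hu2, hu3⟩ := exists_last_edge W (by simp)
  have hYu : u ∈ (Yodd : Finset (SandV m p)) := yodd_of_adj_rt hu2
  have hcard := honeY q (yv a b) hv
  have h1 : u ∈ W.support.toFinset ∩ Yodd := by
    rw [Finset.mem_inter, List.mem_toFinset]; exact ⟨hu1, hYu⟩
  have h2 : (yv a b : SandV m p) ∈ W.support.toFinset ∩ Yodd := by
    rw [Finset.mem_inter, List.mem_toFinset]
    exact ⟨W.start_mem_support, mem_yodd hb⟩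
  have heq : u = yv a b := Finset.card_le_one.mp (le_of_eq hcard) _ h1 _ h2
  subst heq
  exact edges_eq_of_start_edge W (R.isPath q _ hv) (by simp) hu3

/-- The first edge of a clause path is a cross edge into some `y_a^{2k}`. -/
lemma first_edge_kv (R : AssocRouting (sandG i1 i2 i3) rt sandC x) (q : Fin 2) (j : Fin m) :
    ∃ (a : Fin p) (ℓ : Fin 7), (ℓ = 1 ∨ ℓ = 3 ∨ ℓ = 5) ∧
      (R.P q (kv j) (kv_mem_sandC q j)).edges.head? = some s(kv j, yv a ℓ) := by
  set W := R.P q (kv j) (kv_mem_sandC q j) with hWdef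
  clear_value W
  cases W with
  | cons h1 q1 =>
    obtain ⟨a, ℓ, hl, rfl⟩ := neighbor_of_kv h1
    exact ⟨a, ℓ, hl, by simp⟩

end SandSat
namespace SandSat

open FSand SimpleGraph

variable {m p : ℕ} {i1 i2 i3 : Fin p → Fin m}

lemma rt_not_mem_cross {e : Sym2 (SandV m p)} (he : CrossEdge i1 i2 i3 e) :
    rt ∉ e := by
  rcases he with ⟨a, (rfl|rfl|rfl)⟩ <;> simp [Sym2.mem_iff]

lemma not_root_of_cross {e : Sym2 (SandV m p)} (he : CrossEdge i1 i2 i3 e) :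
    ¬ RootEdge e := fun hr => rt_not_mem_cross he (rt_mem_of_root hr)

lemma not_path_of_cross {e : Sym2 (SandV m p)} (he : CrossEdge i1 i2 i3 e) :
    ¬ PathEdge e := by
  obtain ⟨j, hj⟩ := kv_mem_of_cross he
  rintro ⟨a, (rfl|rfl|rfl|rfl|rfl|rfl)⟩ <;> simp [Sym2.mem_iff] at hj

lemma sandW_nonneg {M : ℝ} (hM : 0 ≤ M) (e : Sym2 (SandV m p)) :
    0 ≤ sandW M i1 i2 i3 e := by
  unfold sandW; split_ifs <;> norm_num [hM]

lemma sandW_cross {M : ℝ} {e : Sym2 (SandV m p)} (he : CrossEdge i1 i2 i3 e) :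
    sandW M i1 i2 i3 e = M := by
  unfold sandW
  rw [if_neg (not_root_of_cross he), if_neg (not_path_of_cross he), if_pos he]

variable {x : Sym2 (SandV m p) → ℕ}

/-- Each clause has total incident cross-edge capacity exactly 1. -/
lemma crosscap_one {M : ℝ} (hM : 2 * (m : ℝ) + 8 * p < M)
    (hfeas : Feasible (sandG i1 i2 i3) rt sandC x)
    (hcost : instCost (sandW M i1 i2 i3) x ≤ (M + 2) * m + 8 * p) :
    ∀ j : Fin m, ∑ e ∈ (crossE i1 i2 i3).filter (fun e => kv j ∈ e), x e = 1 := by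
  have hM0 : (0 : ℝ) ≤ M := le_of_lt (lt_of_le_of_lt (by positivity) hM)
  -- each clause's incident cross capacity is at least 1
  have hone : ∀ j : Fin m, 1 ≤ ∑ e ∈ (crossE i1 i2 i3).filter (fun e => kv j ∈ e), x e := by
    intro j
    have hcut := hfeas.2 {kv j} (by simp [rt, kv]) 0
    have hC : ((sandC 0 : Finset (SandV m p)) ∩ {kv j}).card = 1 := by
      rw [Finset.inter_comm, Finset.singleton_inter_of_mem (kv_mem_sandC 0 j)]
      exact Finset.card_singleton _
    rw [hC] at hcut
    refine le_trans hcut ?_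
    unfold FSand.cutCap
    refine Finset.sum_le_sum_of_ne_zero ?_
    intro e hcr hx0
    rw [Finset.mem_filter] at hcr
    obtain ⟨-, u, v, rfl, hu, hv⟩ := hcr
    rw [Finset.mem_singleton] at hu
    subst hu
    have hes : s(kv j, v) ∈ (sandG i1 i2 i3).edgeSet := by
      by_contra hns
      exact hx0 (hfeas.1 _ hns)
    have hcr : CrossEdge i1 i2 i3 s(kv j, v) :=
      cross_of_kv_mem hes (Sym2.mem_mk_left _ _)
    rw [Finset.mem_filter]
    exact ⟨by rw [crossE, Finset.mem_filter]; exact ⟨Finset.mem_univ _, hcr⟩,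
      Sym2.mem_mk_left _ _⟩
  -- the total cross capacity is at most m
  have htot : ∑ e ∈ crossE i1 i2 i3, x e ≤ m := by
    by_contra hgt
    push_neg at hgt
    have h1 : M * ((m : ℝ) + 1) ≤ instCost (sandW M i1 i2 i3) x := by
      have h2 : ∑ e ∈ crossE i1 i2 i3, sandW M i1 i2 i3 e * (x e : ℝ) ≤
          instCost (sandW M i1 i2 i3) x := by
        unfold FSand.instCost
        refine Finset.sum_le_sum_of_subset_of_nonneg (Finset.subset_univ _) ?_
        intro e _ _
        exact mul_nonneg (sandW_nonneg hM0 e) (by positivity)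
      have h3 : ∑ e ∈ crossE i1 i2 i3, sandW M i1 i2 i3 e * (x e : ℝ) =
          M * ((∑ e ∈ crossE i1 i2 i3, x e : ℕ) : ℝ) := by
        push_cast
        rw [Finset.mul_sum]
        refine Finset.sum_congr rfl ?_
        intro e he
        rw [crossE, Finset.mem_filter] at he
        rw [sandW_cross he.2]
      refine le_trans ?_ h2
      rw [h3]
      have : ((m : ℝ) + 1) ≤ ((∑ e ∈ crossE i1 i2 i3, x e : ℕ) : ℝ) := by
        exact_mod_cast hgt
      exact mul_le_mul_of_nonneg_left this hM0
    have := le_trans h1 hcost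
    nlinarith
  -- partition the total by the clause endpoint
  have hpart : ∑ j : Fin m, ∑ e ∈ (crossE i1 i2 i3).filter (fun e => kv j ∈ e), x e =
      ∑ e ∈ crossE i1 i2 i3, x e := by
    calc ∑ j : Fin m, ∑ e ∈ (crossE i1 i2 i3).filter (fun e => kv j ∈ e), x e
        = ∑ j : Fin m, ∑ e ∈ crossE i1 i2 i3, if kv j ∈ e then x e else 0 := by
          exact Finset.sum_congr rfl fun j _ => Finset.sum_filter _ _
      _ = ∑ e ∈ crossE i1 i2 i3, ∑ j : Fin m, if kv j ∈ e then x e else 0 :=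
          Finset.sum_comm
      _ = ∑ e ∈ crossE i1 i2 i3, x e := by
          refine Finset.sum_congr rfl ?_
          intro e he
          rw [crossE, Finset.mem_filter] at he
          rw [← Finset.sum_filter, Finset.sum_const, card_kv_filter he.2, one_smul]
  -- conclude
  intro j
  by_contra hne
  have h2 : 1 < ∑ e ∈ (crossE i1 i2 i3).filter (fun e => kv j ∈ e), x e :=
    lt_of_le_of_ne (hone j) (Ne.symm hne)
  have h3 : ∑ _j : Fin m, 1 < ∑ j : Fin m, ∑ e ∈ (crossE i1 i2 i3).filter
      (fun e => kv j ∈ e), x e :=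
    Finset.sum_lt_sum (fun j _ => hone j) ⟨j, Finset.mem_univ j, h2⟩
  simp only [Finset.sum_const, Finset.card_univ, Fintype.card_fin, smul_eq_mul,
    mul_one] at h3
  exact absurd (hpart ▸ htot) (by omega)
  
end SandSat
namespace SandSat

open FSand SimpleGraph

variable {m p : ℕ} {i1 i2 i3 : Fin p → Fin m} {x : Sym2 (SandV m p) → ℕ}

lemma flow_le (R : AssocRouting (sandG i1 i2 i3) rt sandC x) {q : Fin 2} {e}
    {v : SandV m p} (hv : v ∈ (sandC q : Finset (SandV m p)))
    (he : e ∈ (R.P q v hv).edges) : 1 ≤ x e := by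
  refine le_trans ?_ (R.cap q e)
  exact Finset.card_pos.mpr ⟨⟨v, hv⟩, Finset.mem_filter.mpr ⟨Finset.mem_attach _ _, he⟩⟩

lemma flow2_le (R : AssocRouting (sandG i1 i2 i3) rt sandC x) {q : Fin 2} {e}
    {v v' : SandV m p} (hv : v ∈ (sandC q : Finset (SandV m p)))
    (hv' : v' ∈ (sandC q : Finset (SandV m p))) (hne : v ≠ v')
    (he : e ∈ (R.P q v hv).edges) (he' : e ∈ (R.P q v' hv').edges) : 2 ≤ x e := by
  refine le_trans ?_ (R.cap q e)
  have hsub : ({⟨v, hv⟩, ⟨v', hv'⟩} : Finset {a // a ∈ (sandC q : Finset (SandV m p))}) ⊆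
      (sandC q : Finset (SandV m p)).attach.filter
        (fun u => e ∈ (R.P q u.1 u.2).edges) := by
    intro u hu
    rw [Finset.mem_insert, Finset.mem_singleton] at hu
    rcases hu with rfl | rfl <;>
      exact Finset.mem_filter.mpr ⟨Finset.mem_attach _ _, by assumption⟩
  have := Finset.card_le_card hsub
  rwa [Finset.card_pair (by simpa [Subtype.ext_iff] using hne)] at this

lemma cross_unique
    (hcc : ∀ j : Fin m, ∑ e ∈ (crossE i1 i2 i3).filter (fun e => kv j ∈ e), x e = 1)
    {j : Fin m} {e e' : Sym2 (SandV m p)}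
    (he : e ∈ (crossE i1 i2 i3).filter (fun e => kv j ∈ e))
    (he' : e' ∈ (crossE i1 i2 i3).filter (fun e => kv j ∈ e))
    (h1 : 1 ≤ x e) (h2 : 1 ≤ x e') : e = e' := by
  by_contra hne
  have hsub : ({e, e'} : Finset (Sym2 (SandV m p))) ⊆
      (crossE i1 i2 i3).filter (fun e => kv j ∈ e) := by
    intro u hu
    rw [Finset.mem_insert, Finset.mem_singleton] at hu
    rcases hu with rfl | rfl <;> assumption
  have := Finset.sum_le_sum_of_subset hsub (f := x)
  rw [Finset.sum_pair hne, hcc j] at this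
  omega

lemma mem_crossEj {e : Sym2 (SandV m p)} (hes : e ∈ (sandG i1 i2 i3).edgeSet)
    {j : Fin m} (hj : kv j ∈ e) :
    e ∈ (crossE i1 i2 i3).filter (fun e => kv j ∈ e) :=
  Finset.mem_filter.mpr ⟨Finset.mem_filter.mpr ⟨Finset.mem_univ _,
    cross_of_kv_mem hes hj⟩, hj⟩

lemma rt_not_mem_yodd : (rt : SandV m p) ∉ (Yodd : Finset (SandV m p)) := by
  simp [Yodd]

/-- The full structure of clause paths: a cross edge, a path edge, a root edge. -/
lemma clause_edges (R : AssocRouting (sandG i1 i2 i3) rt sandC x)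
    (honeY : ∀ q v hv, ((R.P q v hv).support.toFinset ∩ Yodd).card = 1)
    (hcc : ∀ j : Fin m, ∑ e ∈ (crossE i1 i2 i3).filter (fun e => kv j ∈ e), x e = 1)
    (q : Fin 2) (j : Fin m) :
    ∃ (a : Fin p) (ℓ w : Fin 7),
      ((ℓ = 1 ∧ (w = 0 ∨ w = 2)) ∨ (ℓ = 3 ∧ (w = 2 ∨ w = 4)) ∨
        (ℓ = 5 ∧ (w = 4 ∨ w = 6))) ∧
      (R.P q (kv j) (kv_mem_sandC q j)).edges =
        [s(kv j, yv a ℓ), s(yv a ℓ, yv a w), s(yv a w, rt)] := by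
  obtain ⟨W, hWdef⟩ : ∃ W, R.P q (kv j) (kv_mem_sandC q j) = W := ⟨_, rfl⟩
  have hWpath : W.IsPath := hWdef ▸ R.isPath q _ _
  have hWhone : (W.support.toFinset ∩ Yodd).card = 1 := hWdef ▸ honeY q _ _
  have hWflow : ∀ e ∈ W.edges, 1 ≤ x e := fun e he =>
    flow_le R (kv_mem_sandC q j) (by rw [hWdef]; exact he)
  have hWmem : ∀ e ∈ W.edges, e ∈ (R.P q (kv j) (kv_mem_sandC q j)).edges := by
    intro e he; rw [hWdef]; exact he
  rw [hWdef]
  cases W with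
  | cons h1 W1 =>
    rename_i v1
    obtain ⟨a, ℓ, hl, rfl⟩ := neighbor_of_kv h1
    cases W1 with
    | cons h2 W2 =>
      rename_i v2
      rw [SimpleGraph.Walk.cons_isPath_iff] at hWpath
      have hW12 := hWpath.1
      rw [SimpleGraph.Walk.cons_isPath_iff] at hW12
      -- the second vertex cannot be a clause node
      have hnotkv : ∀ j'' : Fin m, v2 ≠ kv j'' := by
        intro j'' hv2
        subst hv2
        have hfe : s(yv a ℓ, kv j'') ∈
            (SimpleGraph.Walk.cons h1 (SimpleGraph.Walk.cons h2 W2)).edges := by simp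
        have hfx : 1 ≤ x s(yv a ℓ, kv j'') := hWflow _ hfe
        have hfes : s(yv a ℓ, kv j'') ∈ (sandG i1 i2 i3).edgeSet :=
          (sandG i1 i2 i3).mem_edgeSet.mpr h2
        have hfcr := mem_crossEj hfes (Sym2.mem_mk_right _ _)
        by_cases hjj : j'' = j
        · subst hjj
          refine hWpath.2 ?_
          rw [SimpleGraph.Walk.support_cons]
          exact List.mem_cons_of_mem _ W2.start_mem_support
        · -- the first edge of clause j''’s path is the same cross edge
          obtain ⟨a', ℓ', hl', hhead⟩ := first_edge_kv R q j''
          have he'' : s(kv j'', yv a' ℓ') ∈ (R.P q (kv j'') (kv_mem_sandC q j'')).edges :=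
            List.mem_of_mem_head? hhead
          have he''x : 1 ≤ x s(kv j'', yv a' ℓ') := flow_le R _ he''
          have he''es : s(kv j'', yv a' ℓ') ∈ (sandG i1 i2 i3).edgeSet :=
            SimpleGraph.Walk.edges_subset_edgeSet _ he''
          have he''cr := mem_crossEj he''es (Sym2.mem_mk_left _ _)
          have heq := cross_unique (j := j'') hcc hfcr he''cr hfx he''x
          have h2x := flow2_le R (kv_mem_sandC q j) (kv_mem_sandC q j'')
            (fun h => hjj (kv_injEq.mp h).symm)
            (hWmem _ hfe) (heq ▸ he'')
          have hle : x s(yv a ℓ, kv j'') ≤ 1 := by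
            have h5 := Finset.single_le_sum (f := x) (fun e _ => Nat.zero_le _) hfcr
            have h6 := hcc j''
            omega
          omega
      -- hence it is an odd node adjacent to the entry
      have hD := neighbor_of_yeven hl h2
      rcases hD with ⟨j'', rfl⟩ | hD
      · exact absurd rfl (hnotkv j'')
      have hv2Y : ∃ w : Fin 7, (w = 0 ∨ w = 2 ∨ w = 4 ∨ w = 6) ∧ v2 = yv a w := by
        rcases hD with ⟨h, (rfl|rfl)⟩ | ⟨h, (rfl|rfl)⟩ | ⟨h, (rfl|rfl)⟩ <;>
          exact ⟨_, by simp, rfl⟩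
      obtain ⟨w, hw, rfl⟩ := hv2Y
      -- the walk after the odd node goes directly to the root
      obtain ⟨u, hu1, hu2, hu3⟩ := exists_last_edge W2 (by simp)
      have hYu : u ∈ (Yodd : Finset (SandV m p)) := yodd_of_adj_rt hu2
      have h1mem : u ∈ (SimpleGraph.Walk.cons h1
          (SimpleGraph.Walk.cons h2 W2)).support.toFinset ∩ Yodd := by
        rw [Finset.mem_inter, List.mem_toFinset]
        refine ⟨?_, hYu⟩
        simp only [SimpleGraph.Walk.support_cons, List.mem_cons]
        exact Or.inr (Or.inr hu1)
      have h2mem : (yv a w : SandV m p) ∈ (SimpleGraph.Walk.cons h1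
          (SimpleGraph.Walk.cons h2 W2)).support.toFinset ∩ Yodd := by
        rw [Finset.mem_inter, List.mem_toFinset]
        refine ⟨?_, mem_yodd hw⟩
        simp only [SimpleGraph.Walk.support_cons, List.mem_cons]
        exact Or.inr (Or.inr W2.start_mem_support)
      have huv : u = yv a w :=
        Finset.card_le_one.mp (le_of_eq hWhone) _ h1mem _ h2mem
      subst huv
      have hW2edges : W2.edges = [s(yv a w, rt)] :=
        edges_eq_of_start_edge W2 hW12.1 (by simp) hu3
      refine ⟨a, ℓ, w, ?_, ?_⟩
      · rcases hD with ⟨rfl, h'|h'⟩ | ⟨rfl, h'|h'⟩ | ⟨rfl, h'|h'⟩ <;> simp_all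
      · simp [SimpleGraph.Walk.edges_cons, hW2edges]

end SandSat
namespace SandSat

open FSand SimpleGraph

variable {m p : ℕ} {i1 i2 i3 : Fin p → Fin m} {x : Sym2 (SandV m p) → ℕ}

lemma cnt (R : AssocRouting (sandG i1 i2 i3) rt sandC x) (q : Fin 2)
    (E : Sym2 (SandV m p)) :
    (Finset.univ.filter fun j : Fin m =>
      E ∈ (R.P q (kv j) (kv_mem_sandC q j)).edges).card ≤ x E := by
  refine le_trans ?_ (R.cap q E)
  refine Finset.card_le_card_of_injOn (fun j => ⟨kv j, kv_mem_sandC q j⟩) ?_ ?_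
  · intro j hj
    rw [Finset.mem_coe, Finset.mem_filter] at hj
    exact Finset.mem_filter.mpr ⟨Finset.mem_attach _ _, hj.2⟩
  · intro j _ j' _ h
    rw [Subtype.mk.injEq, kv_injEq] at h
    exact h

lemma cnt' (R : AssocRouting (sandG i1 i2 i3) rt sandC x)
    (honeY : ∀ q v hv, ((R.P q v hv).support.toFinset ∩ Yodd).card = 1)
    {q : Fin 2} {a : Fin p} {b : Fin 7} (hb : b = 0 ∨ b = 2 ∨ b = 4 ∨ b = 6)
    (hv : yv a b ∈ (sandC q : Finset (SandV m p))) :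
    1 + (Finset.univ.filter fun j : Fin m =>
      s(yv a b, rt) ∈ (R.P q (kv j) (kv_mem_sandC q j)).edges).card ≤
      x s(yv a b, rt) := by
  refine le_trans ?_ (R.cap q s(yv a b, rt))
  have hTsub : insert (⟨yv a b, hv⟩ : {v // v ∈ (sandC q : Finset (SandV m p))})
      ((Finset.univ.filter fun j : Fin m =>
        s(yv a b, rt) ∈ (R.P q (kv j) (kv_mem_sandC q j)).edges).image
        (fun j => ⟨kv j, kv_mem_sandC q j⟩)) ⊆
      (sandC q : Finset (SandV m p)).attach.filter
        (fun u => s(yv a b, rt) ∈ (R.P q u.1 u.2).edges) := by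
    intro u hu
    rw [Finset.mem_insert] at hu
    rcases hu with rfl | hu
    · refine Finset.mem_filter.mpr ⟨Finset.mem_attach _ _, ?_⟩
      rw [term_edges R honeY hb hv]
      simp
    · rw [Finset.mem_image] at hu
      obtain ⟨j, hj, rfl⟩ := hu
      rw [Finset.mem_filter] at hj
      exact Finset.mem_filter.mpr ⟨Finset.mem_attach _ _, hj.2⟩
  have hcard := Finset.card_le_card hTsub
  rw [Finset.card_insert_of_notMem, Finset.card_image_of_injOn] at hcard
  · exact le_trans (le_of_eq (Nat.add_comm _ _)) hcard
  · intro j _ j' _ h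
    rw [Subtype.mk.injEq, kv_injEq] at h
    exact h
  · intro hc
    rw [Finset.mem_image] at hc
    obtain ⟨j, -, hj⟩ := hc
    rw [Subtype.mk.injEq] at hj
    exact (kv_eq_yv.mp hj)

lemma card_filter_or_disjoint {α : Type*} (s : Finset α) (P Q R : α → Prop)
    [DecidablePred P] [DecidablePred Q] [DecidablePred R]
    (h : ∀ a ∈ s, P a ↔ (Q a ∨ R a)) (hd : ∀ a ∈ s, ¬(Q a ∧ R a)) :
    (s.filter P).card = (s.filter Q).card + (s.filter R).card := by
  rw [Finset.card_filter, Finset.card_filter, Finset.card_filter,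
    ← Finset.sum_add_distrib]
  refine Finset.sum_congr rfl fun a ha => ?_
  have h1 := h a ha
  have h2 := hd a ha
  by_cases hq : Q a <;> by_cases hr : R a <;> simp_all

lemma rt_not_mem_path {e : Sym2 (SandV m p)} (he : PathEdge e) : rt ∉ e := by
  rcases he with ⟨a, (rfl|rfl|rfl|rfl|rfl|rfl)⟩ <;> simp [Sym2.mem_iff]

lemma sandW_root {M : ℝ} {e : Sym2 (SandV m p)} (he : RootEdge e) :
    sandW M i1 i2 i3 e = 2 := by
  unfold sandW; rw [if_pos he]

lemma sandW_path {M : ℝ} {e : Sym2 (SandV m p)} (he : PathEdge e) :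
    sandW M i1 i2 i3 e = 1 := by
  unfold sandW
  rw [if_neg (fun hr => rt_not_mem_path he (rt_mem_of_root hr)), if_pos he]

lemma mem_Vi_rt {i : Fin p} : (rt : SandV m p) ∈ Vi i := Finset.mem_insert_self _ _

lemma mem_Vi_yv {i : Fin p} {b : Fin 7} : (yv i b : SandV m p) ∈ Vi i :=
  Finset.mem_insert_of_mem (Finset.mem_image_of_mem _ (Finset.mem_univ b))

/-- Lower bound on `χ_i` by the ten edges of the gadget. -/
lemma chi_ge {M : ℝ} (hM0 : 0 ≤ M) (x : Sym2 (SandV m p) → ℕ) (i : Fin p) :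
    ((2 * (x s(yv i 0, rt) + x s(yv i 2, rt) + x s(yv i 4, rt) + x s(yv i 6, rt)) +
      (x s(yv i 0, yv i 1) + x s(yv i 1, yv i 2) + x s(yv i 2, yv i 3) +
        x s(yv i 3, yv i 4) + x s(yv i 4, yv i 5) + x s(yv i 5, yv i 6)) : ℕ) : ℝ) ≤
      chi i1 i2 i3 M x i := by
  have hroot : ∀ b : Fin 7, b = 0 ∨ b = 2 ∨ b = 4 ∨ b = 6 →
      RootEdge (s(yv i b, rt) : Sym2 (SandV m p)) := by
    rintro b (rfl|rfl|rfl|rfl) <;> exact ⟨i, by rw [Sym2.eq_swap]; simp⟩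
  have hpath : ∀ b c : Fin 7,
      (b = 0 ∧ c = 1) ∨ (b = 1 ∧ c = 2) ∨ (b = 2 ∧ c = 3) ∨
      (b = 3 ∧ c = 4) ∨ (b = 4 ∧ c = 5) ∨ (b = 5 ∧ c = 6) →
      PathEdge (s(yv i b, yv i c) : Sym2 (SandV m p)) := by
    rintro b c (⟨rfl,rfl⟩|⟨rfl,rfl⟩|⟨rfl,rfl⟩|⟨rfl,rfl⟩|⟨rfl,rfl⟩|⟨rfl,rfl⟩) <;>
      exact ⟨i, by simp⟩
  set T : Finset (Sym2 (SandV m p)) :=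
    {s(yv i 0, rt), s(yv i 2, rt), s(yv i 4, rt), s(yv i 6, rt),
     s(yv i 0, yv i 1), s(yv i 1, yv i 2), s(yv i 2, yv i 3),
     s(yv i 3, yv i 4), s(yv i 4, yv i 5), s(yv i 5, yv i 6)} with hT
  have hTsub : T ⊆ Finset.univ.filter
      (fun e => e ∈ (sandG i1 i2 i3).edgeSet ∧ ∀ a ∈ e, a ∈ Vi i) := by
    intro e he
    rw [hT] at he
    simp only [Finset.mem_insert, Finset.mem_singleton] at he
    refine Finset.mem_filter.mpr ⟨Finset.mem_univ _, ?_, ?_⟩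
    · rw [mem_edgeSet_sandG]
      rcases he with rfl|rfl|rfl|rfl|rfl|rfl|rfl|rfl|rfl|rfl
      · exact Or.inl (hroot 0 (by simp))
      · exact Or.inl (hroot 2 (by simp))
      · exact Or.inl (hroot 4 (by simp))
      · exact Or.inl (hroot 6 (by simp))
      · exact Or.inr (Or.inl (hpath 0 1 (by simp)))
      · exact Or.inr (Or.inl (hpath 1 2 (by simp)))
      · exact Or.inr (Or.inl (hpath 2 3 (by simp)))
      · exact Or.inr (Or.inl (hpath 3 4 (by simp)))
      · exact Or.inr (Or.inl (hpath 4 5 (by simp)))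
      · exact Or.inr (Or.inl (hpath 5 6 (by simp)))
    · intro v hv
      rcases he with rfl|rfl|rfl|rfl|rfl|rfl|rfl|rfl|rfl|rfl <;>
        rw [Sym2.mem_iff] at hv <;>
        rcases hv with rfl|rfl <;>
        first
          | exact mem_Vi_rt
          | exact mem_Vi_yv
  have hmono : ∑ e ∈ T, sandW M i1 i2 i3 e * (x e : ℝ) ≤ chi i1 i2 i3 M x i := by
    unfold chi
    refine Finset.sum_le_sum_of_subset_of_nonneg hTsub ?_
    intro e _ _
    exact mul_nonneg (sandW_nonneg hM0 e) (by positivity)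
  refine le_trans (le_of_eq ?_) hmono
  rw [hT]
  rw [Finset.sum_insert (by simp [Sym2.eq_iff]),
    Finset.sum_insert (by simp [Sym2.eq_iff]),
    Finset.sum_insert (by simp [Sym2.eq_iff]),
    Finset.sum_insert (by simp [Sym2.eq_iff]),
    Finset.sum_insert (by simp [Sym2.eq_iff]),
    Finset.sum_insert (by simp [Sym2.eq_iff]),
    Finset.sum_insert (by simp [Sym2.eq_iff]),
    Finset.sum_insert (by simp [Sym2.eq_iff]),
    Finset.sum_insert (by simp [Sym2.eq_iff]),
    Finset.sum_singleton]
  rw [sandW_root (hroot 0 (by simp)), sandW_root (hroot 2 (by simp)),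
    sandW_root (hroot 4 (by simp)), sandW_root (hroot 6 (by simp)),
    sandW_path (hpath 0 1 (by simp)), sandW_path (hpath 1 2 (by simp)),
    sandW_path (hpath 2 3 (by simp)), sandW_path (hpath 3 4 (by simp)),
    sandW_path (hpath 4 5 (by simp)), sandW_path (hpath 5 6 (by simp))]
  push_cast
  ring

end SandSat
namespace SandSat

open FSand SimpleGraph

variable {m p : ℕ} {i1 i2 i3 : Fin p → Fin m}

lemma kv_not_mem_Vi {j : Fin m} {i : Fin p} : (kv j : SandV m p) ∉ Vi i := by
  simp [Vi]

lemma yv_mem_Vi_iff {a i : Fin p} {b : Fin 7} : (yv a b : SandV m p) ∈ Vi i ↔ a = i := by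
  simp [Vi, eq_comm]

lemma arith_main (a0 b0 c0 d0 e0 k0 a1 b1 c1 d1 e1 k1 g1 g3 g5 nn A0 A2 A4 A6 E0 E1 E2 E3 E4 E5 : ℕ)
    (hq0a : g1 = a0 + b0) (hq0b : g3 = c0 + d0) (hq0c : g5 = e0 + k0)
    (hq1a : g1 = a1 + b1) (hq1b : g3 = c1 + d1) (hq1c : g5 = e1 + k1)
    (hnsplit : nn = g1 + (g3 + g5))
    (hA00 : 1 + a0 ≤ A0) (hA01 : a1 ≤ A0)
    (hA20 : b0 + c0 ≤ A2) (hA21 : 1 + (b1 + c1) ≤ A2)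
    (hA40 : 1 + (d0 + e0) ≤ A4) (hA41 : d1 + e1 ≤ A4)
    (hA60 : k0 ≤ A6) (hA61 : 1 + k1 ≤ A6)
    (hE00 : a0 ≤ E0) (hE01 : a1 ≤ E0)
    (hE10 : b0 ≤ E1) (hE11 : b1 ≤ E1)
    (hE20 : c0 ≤ E2) (hE21 : c1 ≤ E2)
    (hE30 : d0 ≤ E3) (hE31 : d1 ≤ E3)
    (hE40 : e0 ≤ E4) (hE41 : e1 ≤ E4)
    (hE50 : k0 ≤ E5) (hE51 : k1 ≤ E5) :
    (8 + 2 * nn ≤ 2 * (A0 + A2 + A4 + A6) + (E0 + E1 + E2 + E3 + E4 + E5)) ∧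
    (1 ≤ g3 → 1 ≤ g1 + g5 →
      9 + 2 * nn ≤ 2 * (A0 + A2 + A4 + A6) + (E0 + E1 + E2 + E3 + E4 + E5)) := by
  constructor
  · linarith
  · intro h1 h2
    have h3 : 1 ≤ g1 ∨ 1 ≤ g5 := by omega
    rcases h3 with h3 | h3
    · linarith
    · linarith

end SandSat

open FSand SandSat in
/-- for an optimal installation of cost at most `(M+2)·m + 8p` with an
associated routing inducing no directed cycles and visiting exactly one node of
`∪_i {y_i^1, y_i^3, y_i^5, y_i^7}` per terminal path, each subgraph `G_i` satisfies
`χ_i ≥ 8 + 2·n_i`, strictly when the variable `x_i` is in conflict. -/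
theorem stmt_10 {m p : ℕ} (i1 i2 i3 : Fin p → Fin m)
    (hocc : ∀ i, i1 i ≠ i2 i ∧ i1 i ≠ i3 i ∧ i2 i ≠ i3 i)
    (M : ℝ) (hM : 2 * (m : ℝ) + 8 * p < M)
    (x : Sym2 (SandV m p) → ℕ)
    (hfeas : Feasible (sandG i1 i2 i3) rt sandC x)
    (hopt : ∀ x' : Sym2 (SandV m p) → ℕ, Feasible (sandG i1 i2 i3) rt sandC x' →
      instCost (sandW M i1 i2 i3) x ≤ instCost (sandW M i1 i2 i3) x')
    (hcost : instCost (sandW M i1 i2 i3) x ≤ (M + 2) * m + 8 * p)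
    (R : AssocRouting (sandG i1 i2 i3) rt sandC x)
    (hnocyc : ∀ q, R.NoDirCycle q)
    (honeY : ∀ q v hv, ((R.P q v hv).support.toFinset ∩ Yodd).card = 1)
    (i : Fin p) :
    (8 : ℝ) + 2 * (nCl i1 i2 i3 R i : ℝ) ≤ chi i1 i2 i3 M x i ∧
    (InConflict i1 i2 i3 R i →
      (8 : ℝ) + 2 * (nCl i1 i2 i3 R i : ℝ) < chi i1 i2 i3 M x i) := by
  classical
  have hM0 : (0 : ℝ) ≤ M := le_of_lt (lt_of_le_of_lt (by positivity) hM)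
  have hcc := crosscap_one hM hfeas hcost
  have hstruct := clause_edges R honeY hcc
  choose av lv wv hpat hedges using hstruct
  -- first edges agree across colors
  have hsame : ∀ j, av 1 j = av 0 j ∧ lv 1 j = lv 0 j := by
    intro j
    have h0 : (s(kv j, yv (av 0 j) (lv 0 j)) : Sym2 (SandV m p)) ∈
        (R.P 0 (kv j) (kv_mem_sandC 0 j)).edges := by rw [hedges 0 j]; simp
    have h1 : (s(kv j, yv (av 1 j) (lv 1 j)) : Sym2 (SandV m p)) ∈
        (R.P 1 (kv j) (kv_mem_sandC 1 j)).edges := by rw [hedges 1 j]; simp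
    have hx0 := flow_le R _ h0
    have hx1 := flow_le R _ h1
    have hc0 := mem_crossEj (SimpleGraph.Walk.edges_subset_edgeSet _ h0)
      (Sym2.mem_mk_left _ _)
    have hc1 := mem_crossEj (SimpleGraph.Walk.edges_subset_edgeSet _ h1)
      (Sym2.mem_mk_left _ _)
    have heq := cross_unique hcc hc1 hc0 hx1 hx0
    rw [Sym2.eq_iff] at heq
    simp only [kv_injEq, kv_eq_yv, yv_eq_kv, yv_injEq, false_and, and_false, or_false,
      true_and] at heq
    exact heq
  have hav : ∀ (q : Fin 2) j, av q j = av 0 j := by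
    intro q j; fin_cases q; exacts [rfl, (hsame j).1]
  have hlv : ∀ (q : Fin 2) j, lv q j = lv 0 j := by
    intro q j; fin_cases q; exacts [rfl, (hsame j).2]
  have hpat' : ∀ (q : Fin 2) j, (lv 0 j = 1 ∧ (wv q j = 0 ∨ wv q j = 2)) ∨
      (lv 0 j = 3 ∧ (wv q j = 2 ∨ wv q j = 4)) ∨
      (lv 0 j = 5 ∧ (wv q j = 4 ∨ wv q j = 6)) := by
    intro q j; have h := hpat q j; rw [hlv q j] at h; exact h
  -- membership characterizations
  have hrootmem : ∀ (q : Fin 2) (b : Fin 7) (j : Fin m),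
      (s(yv i b, rt) : Sym2 (SandV m p)) ∈ (R.P q (kv j) (kv_mem_sandC q j)).edges ↔
        (av 0 j = i ∧ wv q j = b) := by
    intro q b j
    rw [hedges q j, hav q j]
    constructor
    · intro h
      simp only [List.mem_cons, List.mem_singleton, List.not_mem_nil, or_false] at h
      rcases h with h | h | h <;> rw [Sym2.eq_iff] at h <;>
        simp only [kv_eq_yv, yv_eq_kv, rt_eq_kv, kv_eq_rt, rt_eq_yv, yv_eq_rt,
          yv_injEq, false_and, and_false, and_true, false_or, or_false] at h
      exact ⟨h.1.symm, h.2.symm⟩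
    · rintro ⟨rfl, rfl⟩
      simp
  have hpathmem : ∀ (q : Fin 2) (b c : Fin 7) (j : Fin m),
      (s(yv i b, yv i c) : Sym2 (SandV m p)) ∈
          (R.P q (kv j) (kv_mem_sandC q j)).edges ↔
        (av 0 j = i ∧ ((lv 0 j = b ∧ wv q j = c) ∨ (lv 0 j = c ∧ wv q j = b))) := by
    intro q b c j
    rw [hedges q j, hav q j, hlv q j]
    constructor
    · intro h
      simp only [List.mem_cons, List.mem_singleton, List.not_mem_nil, or_false] at h
      rcases h with h | h | h <;> rw [Sym2.eq_iff] at h <;>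
        simp only [kv_eq_yv, yv_eq_kv, rt_eq_kv, kv_eq_rt, rt_eq_yv, yv_eq_rt,
          yv_injEq, false_and, and_false, and_true, false_or, or_false] at h
      rcases h with ⟨⟨h1, h2⟩, ⟨-, h3⟩⟩ | ⟨⟨h1, h2⟩, ⟨-, h3⟩⟩
      · exact ⟨h1.symm, Or.inl ⟨h2.symm, h3.symm⟩⟩
      · exact ⟨h1.symm, Or.inr ⟨h3.symm, h2.symm⟩⟩
    · rintro ⟨rfl, (⟨rfl, rfl⟩ | ⟨rfl, rfl⟩)⟩
      · simp
      · rw [show (s(yv (av 0 j) (lv 0 j), yv (av 0 j) (wv q j)) : Sym2 (SandV m p)) =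
          s(yv (av 0 j) (wv q j), yv (av 0 j) (lv 0 j)) from Sym2.eq_swap]
        simp
  -- the count functions
  set f : Fin 2 → Fin 7 → Fin 7 → ℕ := fun q l w =>
    (Finset.univ.filter fun j : Fin m => av 0 j = i ∧ lv 0 j = l ∧ wv q j = w).card with hf
  set g : Fin 7 → ℕ := fun l =>
    (Finset.univ.filter fun j : Fin m => av 0 j = i ∧ lv 0 j = l).card with hg
  set nn : ℕ := (Finset.univ.filter fun j : Fin m => av 0 j = i).card with hnn
  -- root edge counts
  have hcE : ∀ (q : Fin 2) (b : Fin 7), (Finset.univ.filter fun j : Fin m =>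
      (s(yv i b, rt) : Sym2 (SandV m p)) ∈ (R.P q (kv j) (kv_mem_sandC q j)).edges).card
      = (Finset.univ.filter fun j : Fin m => av 0 j = i ∧ wv q j = b).card := by
    intro q b
    congr 1
    exact Finset.filter_congr fun j _ => by rw [hrootmem q b j]
  have hc0 : ∀ q : Fin 2, (Finset.univ.filter fun j : Fin m =>
      av 0 j = i ∧ wv q j = 0).card = f q 1 0 := by
    intro q
    simp only [hf]
    congr 1
    refine Finset.filter_congr fun j _ => ?_
    constructor
    · rintro ⟨h1, h2⟩
      refine ⟨h1, ?_, h2⟩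
      rcases hpat' q j with ⟨hA, hB|hB⟩ | ⟨hA, hB|hB⟩ | ⟨hA, hB|hB⟩ <;> rw [h2] at hB <;>
        first | exact hA | exact absurd hB (by decide)
    · rintro ⟨h1, -, h3⟩; exact ⟨h1, h3⟩
  have hc6 : ∀ q : Fin 2, (Finset.univ.filter fun j : Fin m =>
      av 0 j = i ∧ wv q j = 6).card = f q 5 6 := by
    intro q
    simp only [hf]
    congr 1
    refine Finset.filter_congr fun j _ => ?_
    constructor
    · rintro ⟨h1, h2⟩
      refine ⟨h1, ?_, h2⟩
      rcases hpat' q j with ⟨hA, hB|hB⟩ | ⟨hA, hB|hB⟩ | ⟨hA, hB|hB⟩ <;> rw [h2] at hB <;>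
        first | exact hA | exact absurd hB (by decide)
    · rintro ⟨h1, -, h3⟩; exact ⟨h1, h3⟩
  have hc2 : ∀ q : Fin 2, (Finset.univ.filter fun j : Fin m =>
      av 0 j = i ∧ wv q j = 2).card = f q 1 2 + f q 3 2 := by
    intro q
    simp only [hf]
    refine card_filter_or_disjoint _ _ _ _ (fun j _ => ?_) (fun j _ => ?_)
    · constructor
      · rintro ⟨h1, h2⟩
        rcases hpat' q j with ⟨hA, hB|hB⟩ | ⟨hA, hB|hB⟩ | ⟨hA, hB|hB⟩ <;> rw [h2] at hB <;>
          first
            | exact Or.inl ⟨h1, hA, h2⟩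
            | exact Or.inr ⟨h1, hA, h2⟩
            | exact absurd hB (by decide)
      · rintro (⟨h1, -, h3⟩ | ⟨h1, -, h3⟩) <;> exact ⟨h1, h3⟩
    · rintro ⟨⟨-, hA, -⟩, ⟨-, hB, -⟩⟩
      rw [hA] at hB
      exact absurd hB (by decide)
  have hc4 : ∀ q : Fin 2, (Finset.univ.filter fun j : Fin m =>
      av 0 j = i ∧ wv q j = 4).card = f q 3 4 + f q 5 4 := by
    intro q
    simp only [hf]
    refine card_filter_or_disjoint _ _ _ _ (fun j _ => ?_) (fun j _ => ?_)
    · constructor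
      · rintro ⟨h1, h2⟩
        rcases hpat' q j with ⟨hA, hB|hB⟩ | ⟨hA, hB|hB⟩ | ⟨hA, hB|hB⟩ <;> rw [h2] at hB <;>
          first
            | exact Or.inl ⟨h1, hA, h2⟩
            | exact Or.inr ⟨h1, hA, h2⟩
            | exact absurd hB (by decide)
      · rintro (⟨h1, -, h3⟩ | ⟨h1, -, h3⟩) <;> exact ⟨h1, h3⟩
    · rintro ⟨⟨-, hA, -⟩, ⟨-, hB, -⟩⟩
      rw [hA] at hB
      exact absurd hB (by decide)
  -- path edge counts
  have hcP : ∀ (q : Fin 2) (b c l w : Fin 7),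
      (∀ j, (lv 0 j = b ∧ wv q j = c) ∨ (lv 0 j = c ∧ wv q j = b) ↔
        (lv 0 j = l ∧ wv q j = w)) →
      (Finset.univ.filter fun j : Fin m =>
        (s(yv i b, yv i c) : Sym2 (SandV m p)) ∈
          (R.P q (kv j) (kv_mem_sandC q j)).edges).card = f q l w := by
    intro q b c l w hiff
    simp only [hf]
    congr 1
    refine Finset.filter_congr fun j _ => ?_
    rw [hpathmem q b c j]
    constructor
    · rintro ⟨h1, h2⟩
      obtain ⟨h3, h4⟩ := (hiff j).mp h2
      exact ⟨h1, h3, h4⟩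
    · rintro ⟨h1, h3, h4⟩
      exact ⟨h1, (hiff j).mpr ⟨h3, h4⟩⟩
  have hkill : ∀ (q : Fin 2) j (b : Fin 7), b = 0 ∨ b = 2 ∨ b = 4 ∨ b = 6 →
      lv 0 j ≠ b := by
    intro q j b hb h
    rcases hpat' 0 j with ⟨hA, -⟩ | ⟨hA, -⟩ | ⟨hA, -⟩ <;> rw [hA] at h <;>
      rcases hb with rfl|rfl|rfl|rfl <;> exact absurd h (by decide)
  -- entry splits (per color)
  have hgsplit : ∀ (q : Fin 2), g 1 = f q 1 0 + f q 1 2 ∧ g 3 = f q 3 2 + f q 3 4 ∧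
      g 5 = f q 5 4 + f q 5 6 := by
    intro q
    refine ⟨?_, ?_, ?_⟩ <;>
    · simp only [hg, hf]
      refine card_filter_or_disjoint _ _ _ _ (fun j _ => ?_) (fun j _ => ?_)
      · constructor
        · rintro ⟨h1, h2⟩
          rcases hpat' q j with ⟨hA, hB|hB⟩ | ⟨hA, hB|hB⟩ | ⟨hA, hB|hB⟩ <;>
            rw [h2] at hA <;>
            first
              | exact Or.inl ⟨h1, h2, hB⟩
              | exact Or.inr ⟨h1, h2, hB⟩
              | exact absurd hA (by decide)
        · rintro (⟨h1, h2, -⟩ | ⟨h1, h2, -⟩) <;> exact ⟨h1, h2⟩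
      · rintro ⟨⟨-, -, hA⟩, ⟨-, -, hB⟩⟩
        rw [hA] at hB
        exact absurd hB (by decide)
  have hnsplit : nn = g 1 + (g 3 + g 5) := by
    have hA : ∀ j : Fin m, av 0 j = i ↔ ((av 0 j = i ∧ lv 0 j = 1) ∨
        (av 0 j = i ∧ (lv 0 j = 3 ∨ lv 0 j = 5))) := by
      intro j
      constructor
      · intro h1
        rcases hpat' 0 j with ⟨hA, -⟩ | ⟨hA, -⟩ | ⟨hA, -⟩
        · exact Or.inl ⟨h1, hA⟩
        · exact Or.inr ⟨h1, Or.inl hA⟩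
        · exact Or.inr ⟨h1, Or.inr hA⟩
      · rintro (⟨h1, -⟩ | ⟨h1, -⟩) <;> exact h1
    have hB : ∀ j : Fin m, (av 0 j = i ∧ (lv 0 j = 3 ∨ lv 0 j = 5)) ↔
        ((av 0 j = i ∧ lv 0 j = 3) ∨ (av 0 j = i ∧ lv 0 j = 5)) := by
      intro j
      constructor
      · rintro ⟨h1, hb | hb⟩
        · exact Or.inl ⟨h1, hb⟩
        · exact Or.inr ⟨h1, hb⟩
      · rintro (⟨h1, hb⟩ | ⟨h1, hb⟩)
        · exact ⟨h1, Or.inl hb⟩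
        · exact ⟨h1, Or.inr hb⟩
    have h1 := card_filter_or_disjoint (Finset.univ : Finset (Fin m))
      (fun j => av 0 j = i) (fun j => av 0 j = i ∧ lv 0 j = 1)
      (fun j => av 0 j = i ∧ (lv 0 j = 3 ∨ lv 0 j = 5)) (fun j _ => hA j)
      (by rintro j - ⟨⟨-, ha⟩, ⟨-, hb | hb⟩⟩ <;> rw [ha] at hb <;> exact absurd hb (by decide))
    have h2 := card_filter_or_disjoint (Finset.univ : Finset (Fin m))
      (fun j => av 0 j = i ∧ (lv 0 j = 3 ∨ lv 0 j = 5))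
      (fun j => av 0 j = i ∧ lv 0 j = 3) (fun j => av 0 j = i ∧ lv 0 j = 5)
      (fun j _ => hB j)
      (by rintro j - ⟨⟨-, ha⟩, ⟨-, hb⟩⟩; rw [ha] at hb; exact absurd hb (by decide))
    simp only [hnn, hg]
    rw [h1, h2]
  -- the number of clause paths through the gadget
  have hnCl : nCl i1 i2 i3 R i = nn := by
    simp only [hnn]
    unfold nCl
    congr 1
    refine Finset.filter_congr fun j _ => ?_
    constructor
    · rintro ⟨e, he, hVi⟩
      rw [hedges 0 j] at he
      simp only [List.mem_cons, List.mem_singleton, List.not_mem_nil, or_false] at he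
      rcases he with rfl | rfl | rfl
      · exact absurd (hVi _ (Sym2.mem_mk_left _ _)) kv_not_mem_Vi
      · exact yv_mem_Vi_iff.mp (hVi _ (Sym2.mem_mk_left _ _))
      · exact yv_mem_Vi_iff.mp (hVi _ (Sym2.mem_mk_left _ _))
    · intro h
      refine ⟨s(yv (av 0 j) (lv 0 j), yv (av 0 j) (wv 0 j)),
        by rw [hedges 0 j]; simp, ?_⟩
      intro a ha
      rw [Sym2.mem_iff] at ha
      rcases ha with rfl | rfl <;> rw [h] <;> exact mem_Vi_yv
  -- capacity lower bounds on the root edges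
  have hA00 : 1 + f 0 1 0 ≤ x s(yv i 0, rt) := by
    have h := cnt' R honeY (b := 0) (by simp) (yv0_mem_sandC (a := i))
    rwa [hcE 0 0, hc0 0] at h
  have hA01 : f 1 1 0 ≤ x s(yv i 0, rt) := by
    have h := cnt R 1 s(yv i 0, rt)
    rwa [hcE 1 0, hc0 1] at h
  have hA20 : f 0 1 2 + f 0 3 2 ≤ x s(yv i 2, rt) := by
    have h := cnt R 0 s(yv i 2, rt)
    rwa [hcE 0 2, hc2 0] at h
  have hA21 : 1 + (f 1 1 2 + f 1 3 2) ≤ x s(yv i 2, rt) := by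
    have h := cnt' R honeY (b := 2) (by simp) (yv2_mem_sandC (a := i))
    rwa [hcE 1 2, hc2 1] at h
  have hA40 : 1 + (f 0 3 4 + f 0 5 4) ≤ x s(yv i 4, rt) := by
    have h := cnt' R honeY (b := 4) (by simp) (yv4_mem_sandC (a := i))
    rwa [hcE 0 4, hc4 0] at h
  have hA41 : f 1 3 4 + f 1 5 4 ≤ x s(yv i 4, rt) := by
    have h := cnt R 1 s(yv i 4, rt)
    rwa [hcE 1 4, hc4 1] at h
  have hA60 : f 0 5 6 ≤ x s(yv i 6, rt) := by
    have h := cnt R 0 s(yv i 6, rt)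
    rwa [hcE 0 6, hc6 0] at h
  have hA61 : 1 + f 1 5 6 ≤ x s(yv i 6, rt) := by
    have h := cnt' R honeY (b := 6) (by simp) (yv6_mem_sandC (a := i))
    rwa [hcE 1 6, hc6 1] at h
  -- capacity lower bounds on the path edges
  have hE01 : ∀ q : Fin 2, f q 1 0 ≤ x s(yv i 0, yv i 1) := by
    intro q
    have h := cnt R q s(yv i 0, yv i 1)
    rwa [hcP q 0 1 1 0 (fun j => by
      constructor
      · rintro (⟨hA, -⟩ | h)
        · exact absurd hA (hkill q j 0 (by simp))
        · exact h
      · exact Or.inr)] at h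
  have hE12 : ∀ q : Fin 2, f q 1 2 ≤ x s(yv i 1, yv i 2) := by
    intro q
    have h := cnt R q s(yv i 1, yv i 2)
    rwa [hcP q 1 2 1 2 (fun j => by
      constructor
      · rintro (h | ⟨hA, -⟩)
        · exact h
        · exact absurd hA (hkill q j 2 (by simp))
      · exact Or.inl)] at h
  have hE23 : ∀ q : Fin 2, f q 3 2 ≤ x s(yv i 2, yv i 3) := by
    intro q
    have h := cnt R q s(yv i 2, yv i 3)
    rwa [hcP q 2 3 3 2 (fun j => by
      constructor
      · rintro (⟨hA, -⟩ | h)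
        · exact absurd hA (hkill q j 2 (by simp))
        · exact h
      · exact Or.inr)] at h
  have hE34 : ∀ q : Fin 2, f q 3 4 ≤ x s(yv i 3, yv i 4) := by
    intro q
    have h := cnt R q s(yv i 3, yv i 4)
    rwa [hcP q 3 4 3 4 (fun j => by
      constructor
      · rintro (h | ⟨hA, -⟩)
        · exact h
        · exact absurd hA (hkill q j 4 (by simp))
      · exact Or.inl)] at h
  have hE45 : ∀ q : Fin 2, f q 5 4 ≤ x s(yv i 4, yv i 5) := by
    intro q
    have h := cnt R q s(yv i 4, yv i 5)
    rwa [hcP q 4 5 5 4 (fun j => by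
      constructor
      · rintro (⟨hA, -⟩ | h)
        · exact absurd hA (hkill q j 4 (by simp))
        · exact h
      · exact Or.inr)] at h
  have hE56 : ∀ q : Fin 2, f q 5 6 ≤ x s(yv i 5, yv i 6) := by
    intro q
    have h := cnt R q s(yv i 5, yv i 6)
    rwa [hcP q 5 6 5 6 (fun j => by
      constructor
      · rintro (h | ⟨hA, -⟩)
        · exact h
        · exact absurd hA (hkill q j 6 (by simp))
      · exact Or.inl)] at h
  have hchi := chi_ge (i1 := i1) (i2 := i2) (i3 := i3) hM0 x i
  have hq0 := hgsplit 0
  have hq1 := hgsplit 1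
  have hE010 := hE01 0
  have hE011 := hE01 1
  have hE120 := hE12 0
  have hE121 := hE12 1
  have hE230 := hE23 0
  have hE231 := hE23 1
  have hE340 := hE34 0
  have hE341 := hE34 1
  have hE450 := hE45 0
  have hE451 := hE45 1
  have hE560 := hE56 0
  have hE561 := hE56 1
  have harith := arith_main (f 0 1 0) (f 0 1 2) (f 0 3 2) (f 0 3 4) (f 0 5 4) (f 0 5 6)
    (f 1 1 0) (f 1 1 2) (f 1 3 2) (f 1 3 4) (f 1 5 4) (f 1 5 6) (g 1) (g 3) (g 5) nn
    (x s(yv i 0, rt)) (x s(yv i 2, rt)) (x s(yv i 4, rt)) (x s(yv i 6, rt))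
    (x s(yv i 0, yv i 1)) (x s(yv i 1, yv i 2)) (x s(yv i 2, yv i 3))
    (x s(yv i 3, yv i 4)) (x s(yv i 4, yv i 5)) (x s(yv i 5, yv i 6))
    hq0.1 hq0.2.1 hq0.2.2 hq1.1 hq1.2.1 hq1.2.2 hnsplit
    hA00 hA01 hA20 hA21 hA40 hA41 hA60 hA61
    hE010 hE011 hE120 hE121 hE230 hE231 hE340 hE341 hE450 hE451 hE560 hE561
  refine ⟨?_, ?_⟩
  · calc (8 : ℝ) + 2 * (nCl i1 i2 i3 R i : ℝ)
        = ((8 + 2 * nn : ℕ) : ℝ) := by rw [hnCl]; push_cast; ring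
      _ ≤ _ := Nat.cast_le.mpr harith.1
      _ ≤ chi i1 i2 i3 M x i := hchi
  · intro hconf
    obtain ⟨j, j', hjj, ⟨e, he0, he1, hey⟩, ⟨e', he0', he1', hey'⟩⟩ := hconf
    have hj3 : av 0 j = i ∧ lv 0 j = 3 := by
      rw [hedges 0 j] at he0
      simp only [List.head?_cons, Option.some.injEq] at he0
      rw [← he0, Sym2.mem_iff] at hey
      rcases hey with h | h
      · exact absurd h (by simp)
      · obtain ⟨h1, h2⟩ := yv_injEq.mp h
        exact ⟨h1.symm, h2.symm⟩
    have hj' : av 0 j' = i ∧ (lv 0 j' = 1 ∨ lv 0 j' = 5) := by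
      rw [hedges 0 j'] at he0'
      simp only [List.head?_cons, Option.some.injEq] at he0'
      rw [← he0'] at hey'
      rcases hey' with h | h <;> rw [Sym2.mem_iff] at h <;> rcases h with h | h
      · exact absurd h (by simp)
      · obtain ⟨h1, h2⟩ := yv_injEq.mp h
        exact ⟨h1.symm, Or.inl h2.symm⟩
      · exact absurd h (by simp)
      · obtain ⟨h1, h2⟩ := yv_injEq.mp h
        exact ⟨h1.symm, Or.inr h2.symm⟩
    have hg3 : 1 ≤ g 3 := by
      simp only [hg]
      exact Finset.card_pos.mpr ⟨j, Finset.mem_filter.mpr ⟨Finset.mem_univ _, hj3⟩⟩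
    have hg15 : 1 ≤ g 1 + g 5 := by
      rcases hj'.2 with h | h
      · have h5 : 1 ≤ g 1 := by
          simp only [hg]
          exact Finset.card_pos.mpr ⟨j', Finset.mem_filter.mpr
            ⟨Finset.mem_univ _, hj'.1, h⟩⟩
        omega
      · have h5 : 1 ≤ g 5 := by
          simp only [hg]
          exact Finset.card_pos.mpr ⟨j', Finset.mem_filter.mpr
            ⟨Finset.mem_univ _, hj'.1, h⟩⟩
        omega
    have hnum := harith.2 hg3 hg15
    have hlt : (8 : ℝ) + 2 * (nCl i1 i2 i3 R i : ℝ) < ((9 + 2 * nn : ℕ) : ℝ) := by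
      rw [hnCl]; push_cast; linarith
    exact lt_of_lt_of_le hlt (le_trans (Nat.cast_le.mpr hnum) hchi)
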